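/- Let A ∈ ℝ^{n×n} be symmetric positive definite, let b ∈ ℝⁿ be nonzero, let c ∈ ℝ, and set f(u) = ⟨u, Au⟩ − 2⟨u, b⟩ + c and y = A⁻¹b. Let X ∈ ℝ^{n×p} (p ≥ 1) have columns x₁,…,xₚ, and let α > 0 be such that X and αy satisfy the vertex non-cover condition. Suppose η > 0 satisfies η < 2α⟨b, A⁻¹b⟩ − 2·max_{i∈[p]} ⟨b, xᵢ⟩. Let T be the convex cone {Σ_{i=1}^p λᵢ·(xᵢ − αy) : λᵢ ≥ 0}, and let I ⊆ [p] be a set of indices such that every i ∈ [p] for which xᵢ − αy generates an extreme ray of T belongs to I. Then for every global minimizer β* of β ↦ f(Xβ) + η·Σ_{i=1}^p βᵢ over the nonnegative orthant {β ∈ ℝᵖ : βᵢ ≥ 0 for all i}, one has βᵢ* = 0 for every i ∉ I. -/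

import Mathlib

open Finset Matrix

noncomputable section

/-- A nonzero vector `w` generates an extreme ray of the convex cone `T`. -/
def GeneratesExtremeRay {E : Type*} [AddCommGroup E] [Module ℝ E]
    (T : Set E) (w : E) : Prop :=
  w ≠ 0 ∧ w ∈ T ∧ ∀ w₁ w₂, w₁ ∈ T → w₂ ∈ T → w = w₁ + w₂ →
    (∃ c : ℝ, 0 ≤ c ∧ w₁ = c • w) ∧ (∃ c : ℝ, 0 ≤ c ∧ w₂ = c • w)

/-- `X` (with columns `x i`) and the point `v` satisfy the vertex non-cover condition. -/
def VertexNonCover {E : Type*} [AddCommGroup E] [Module ℝ E] {p : ℕ}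
    (x : Fin p → E) (v : E) : Prop :=
  (∀ i, v ≠ x i) ∧
    Set.extremePoints ℝ (convexHull ℝ (Set.range x ∪ {v})) = Set.range x ∪ {v}


lemma small_t {P K ε : ℝ} (hε : 0 < ε) (h : ∀ t : ℝ, 0 < t → t ≤ ε → P ≤ t * K) : P ≤ 0 := by
  by_contra hP
  push_neg at hP
  rcases le_or_gt K 0 with hK | hK
  · have := h ε hε le_rfl
    nlinarith
  · have htpos : 0 < min ε (P / (2 * K)) := lt_min hε (by positivity)
    have h1 := h _ htpos (min_le_left _ _)
    have h2 : min ε (P / (2 * K)) * K ≤ (P / (2 * K)) * K :=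
      mul_le_mul_of_nonneg_right (min_le_right _ _) hK.le
    have h3 : (P / (2 * K)) * K = P / 2 := by field_simp
    nlinarith

lemma lemE {E : Type*} [AddCommGroup E] [Module ℝ E] {C : Set E} (hC : Convex ℝ C)
    {e : E} (he : e ∈ Set.extremePoints ℝ C) {ι : Type*} [DecidableEq ι] (F : Finset ι)
    (t : ι → ℝ) (z : ι → E) (ht : ∀ j ∈ F, 0 ≤ t j) (hs : ∑ j ∈ F, t j = 1)
    (hz : ∀ j ∈ F, z j ∈ C) (heq : ∑ j ∈ F, t j • z j = e) :
    ∀ j ∈ F, 0 < t j → z j = e := by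
  intro j hj hjt
  have herase : ∑ k ∈ F.erase j, t k = 1 - t j := by
    have := Finset.add_sum_erase F t hj
    linarith
  by_cases h1 : t j = 1
  · have hz0 : ∀ k ∈ F.erase j, t k = 0 := by
      have h0 : ∑ k ∈ F.erase j, t k = 0 := by rw [herase, h1]; ring
      exact fun k hk => (Finset.sum_eq_zero_iff_of_nonneg
        (fun k hk => ht k (Finset.mem_of_mem_erase hk))).1 h0 k hk
    have : ∑ k ∈ F, t k • z k = t j • z j := by
      rw [← Finset.add_sum_erase F _ hj,
        Finset.sum_eq_zero (fun k hk => by rw [hz0 k hk, zero_smul]), add_zero]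
    rw [this, h1, one_smul] at heq
    exact heq
  · have hle : t j ≤ 1 := by
      have : 0 ≤ ∑ k ∈ F.erase j, t k :=
        Finset.sum_nonneg fun k hk => ht k (Finset.mem_of_mem_erase hk)
      linarith
    have hpos : 0 < 1 - t j := by
      rcases lt_or_eq_of_le hle with h | h
      · linarith
      · exact absurd h h1
    set q : E := (1 - t j)⁻¹ • ∑ k ∈ F.erase j, t k • z k with hqdef
    have hqC : q ∈ C := by
      have hq2 : q = ∑ k ∈ F.erase j, ((1 - t j)⁻¹ * t k) • z k := by
        rw [hqdef, Finset.smul_sum]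
        exact Finset.sum_congr rfl fun k _ => smul_smul _ _ _
      rw [hq2]
      refine hC.sum_mem (fun k hk => mul_nonneg (by positivity)
        (ht k (Finset.mem_of_mem_erase hk))) ?_
        (fun k hk => hz k (Finset.mem_of_mem_erase hk))
      rw [← Finset.mul_sum, herase]
      field_simp
    have hseg : e ∈ openSegment ℝ (z j) q := by
      refine ⟨t j, 1 - t j, hjt, hpos, by ring, ?_⟩
      rw [hqdef, smul_inv_smul₀ hpos.ne', ← heq, ← Finset.add_sum_erase F _ hj]
    exact ((mem_extremePoints.1 he).2 (z j) (hz j hj) q hqC hseg).1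

lemma lemA {E : Type*} [AddCommGroup E] [Module ℝ E] {p : ℕ}
    (x : Fin p → E) (v : E) (hvnc : VertexNonCover x v) (i : Fin p)
    (hne : ¬ GeneratesExtremeRay
      {u : E | ∃ lam : Fin p → ℝ, (∀ j, 0 ≤ lam j) ∧ u = ∑ j, lam j • (x j - v)}
      (x i - v)) :
    ∃ c : Fin p → ℝ, (∀ j, 0 ≤ c j) ∧ c i = 0 ∧
      (x i - v) = ∑ j, c j • (x j - v) ∧ 1 < ∑ j, c j := by
  classical
  set C := convexHull ℝ (Set.range x ∪ {v}) with hC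
  have hCconv : Convex ℝ C := convex_convexHull ℝ _
  have hxC : ∀ j, x j ∈ C := fun j => subset_convexHull ℝ _ (Or.inl ⟨j, rfl⟩)
  have hvC : v ∈ C := subset_convexHull ℝ _ (Or.inr rfl)
  have hxext : ∀ j, x j ∈ Set.extremePoints ℝ C := fun j => by
    rw [hC, hvnc.2]; exact Or.inl ⟨j, rfl⟩
  have hvext : v ∈ Set.extremePoints ℝ C := by
    rw [hC, hvnc.2]; exact Or.inr rfl
  -- pointedness
  have lemP : ∀ d : Fin p → ℝ, (∀ j, 0 ≤ d j) → ∑ j, d j • (x j - v) = 0 →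
      ∀ j, d j = 0 := by
    intro d hd hsum0 j0
    by_contra hj0
    have hj0pos : 0 < d j0 := (hd j0).lt_of_ne (Ne.symm hj0)
    have hσpos : 0 < ∑ j, d j :=
      lt_of_lt_of_le hj0pos (Finset.single_le_sum (fun k _ => hd k) (Finset.mem_univ j0))
    have h1 : ∑ j, d j • x j = (∑ j, d j) • v := by
      have h2 : ∑ j, d j • (x j - v) = (∑ j, d j • x j) - (∑ j, d j) • v := by
        simp only [smul_sub, Finset.sum_sub_distrib, ← Finset.sum_smul]
      rw [h2] at hsum0
      exact sub_eq_zero.mp hsum0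
    have hcomb : ∑ j, (d j / (∑ k, d k)) • x j = v := by
      have h3 : ∑ j, (d j / (∑ k, d k)) • x j = (∑ k, d k)⁻¹ • ∑ j, d j • x j := by
        rw [Finset.smul_sum]
        exact Finset.sum_congr rfl fun k _ => by
          rw [smul_smul, div_eq_inv_mul]
      rw [h3, h1, inv_smul_smul₀ hσpos.ne']
    have := lemE hCconv hvext Finset.univ (fun j => d j / (∑ k, d k)) x
      (fun j _ => div_nonneg (hd j) hσpos.le)
      (by rw [← Finset.sum_div, div_self hσpos.ne'])
      (fun j _ => hxC j) hcomb j0 (Finset.mem_univ j0) (div_pos hj0pos hσpos)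
    exact hvnc.1 j0 this.symm
  -- extreme ray failure gives a witness
  have hw0 : x i - v ≠ 0 := sub_ne_zero_of_ne (Ne.symm (hvnc.1 i))
  have hsingle : ∑ j, (if j = i then (1:ℝ) else 0) • (x j - v) = x i - v := by
    simp [ite_smul]
  have hwT : x i - v ∈ {u : E | ∃ lam : Fin p → ℝ, (∀ j, 0 ≤ lam j) ∧
      u = ∑ j, lam j • (x j - v)} := by
    exact ⟨fun j => if j = i then 1 else 0,
      fun j => by dsimp only; split <;> norm_num, hsingle.symm⟩
  have hnotall : ¬ ∀ w₁ w₂, w₁ ∈ {u : E | ∃ lam : Fin p → ℝ, (∀ j, 0 ≤ lam j) ∧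
      u = ∑ j, lam j • (x j - v)} → w₂ ∈ {u : E | ∃ lam : Fin p → ℝ, (∀ j, 0 ≤ lam j) ∧
      u = ∑ j, lam j • (x j - v)} → x i - v = w₁ + w₂ →
      (∃ c : ℝ, 0 ≤ c ∧ w₁ = c • (x i - v)) ∧ (∃ c : ℝ, 0 ≤ c ∧ w₂ = c • (x i - v)) :=
    fun hall => hne ⟨hw0, hwT, hall⟩
  push_neg at hnotall
  obtain ⟨w₁, w₂, hw₁T, hw₂T, heq, hnot⟩ := hnotall
  obtain ⟨lam, hlam, hw₁⟩ := hw₁T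
  obtain ⟨mu, hmu, hw₂⟩ := hw₂T
  have hνnn : ∀ j, 0 ≤ lam j + mu j := fun j => add_nonneg (hlam j) (hmu j)
  have hν : x i - v = ∑ j, (lam j + mu j) • (x j - v) := by
    rw [heq, hw₁, hw₂, ← Finset.sum_add_distrib]
    exact Finset.sum_congr rfl fun j _ => (add_smul _ _ _).symm
  have hνi : lam i + mu i < 1 := by
    by_contra hge
    push_neg at hge
    have hd0 : ∀ j, 0 ≤ (if j = i then lam i + mu i - 1 else lam j + mu j) := by
      intro j; split
      · linarith
      · exact hνnn j
    have hdsum : ∑ j, (if j = i then lam i + mu i - 1 else lam j + mu j) • (x j - v)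
        = 0 := by
      have hterm : ∀ j, (if j = i then lam i + mu i - 1 else lam j + mu j) • (x j - v) =
          (lam j + mu j) • (x j - v) - (if j = i then (1:ℝ) else 0) • (x j - v) := by
        intro j
        by_cases hji : j = i
        · subst hji; rw [if_pos rfl, if_pos rfl, sub_smul, one_smul]
        · rw [if_neg hji, if_neg hji, zero_smul, sub_zero]
      rw [Finset.sum_congr rfl (fun j _ => hterm j), Finset.sum_sub_distrib, ← hν, hsingle,
        sub_self]
    have hall0 := lemP _ hd0 hdsum
    have hνj0 : ∀ j, j ≠ i → lam j + mu j = 0 := fun j hj => by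
      have := hall0 j; rwa [if_neg hj] at this
    refine hnot ⟨lam i, hlam i, ?_⟩ (mu i) (hmu i) ?_
    · rw [hw₁, Finset.sum_eq_single i ?_ (fun h => absurd (Finset.mem_univ i) h)]
      intro j _ hj
      have hl0 : lam j = 0 := by
        have h1 := hνj0 j hj; have h2 := hlam j; have h3 := hmu j; linarith
      rw [hl0, zero_smul]
    · rw [hw₂, Finset.sum_eq_single i ?_ (fun h => absurd (Finset.mem_univ i) h)]
      intro j _ hj
      have hl0 : mu j = 0 := by
        have h1 := hνj0 j hj; have h2 := hlam j; have h3 := hmu j; linarith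
      rw [hl0, zero_smul]
  have h1νi : 0 < 1 - (lam i + mu i) := by linarith
  have hc0 : ∀ j, 0 ≤ (if j = i then (0:ℝ) else (lam j + mu j) / (1 - (lam i + mu i))) := by
    intro j; split
    · exact le_rfl
    · exact div_nonneg (hνnn j) h1νi.le
  have hrep : x i - v =
      ∑ j, (if j = i then (0:ℝ) else (lam j + mu j) / (1 - (lam i + mu i))) • (x j - v) := by
    have hkey : ∑ j, (if j = i then (0:ℝ) else (lam j + mu j) / (1 - (lam i + mu i))) • (x j - v)
        = (1 - (lam i + mu i))⁻¹ •
          ((∑ j, (lam j + mu j) • (x j - v)) - (lam i + mu i) • (x i - v)) := by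
      rw [smul_sub, Finset.smul_sum]
      have hterm : ∀ j, (if j = i then (0:ℝ) else (lam j + mu j) / (1 - (lam i + mu i))) • (x j - v)
          = (1 - (lam i + mu i))⁻¹ • ((lam j + mu j) • (x j - v))
            - (if j = i then (1 - (lam i + mu i))⁻¹ * (lam i + mu i) else 0) • (x j - v) := by
        intro j
        by_cases hji : j = i
        · subst hji
          rw [if_pos rfl, if_pos rfl, zero_smul, smul_smul, ← sub_smul]
          rw [show (1 - (lam j + mu j))⁻¹ * (lam j + mu j)
              - (1 - (lam j + mu j))⁻¹ * (lam j + mu j) = 0 by ring, zero_smul]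
        · rw [if_neg hji, if_neg hji, zero_smul, sub_zero, smul_smul, div_eq_inv_mul]
      rw [Finset.sum_congr rfl (fun j _ => hterm j), Finset.sum_sub_distrib]
      congr 1
      rw [Finset.sum_congr rfl (fun j _ => ite_smul _ _ _ _)]
      simp [smul_smul]
    rw [hkey, ← hν,
      show (x i - v) - (lam i + mu i) • (x i - v) = (1 - (lam i + mu i)) • (x i - v) by
        rw [sub_smul, one_smul],
      inv_smul_smul₀ h1νi.ne']
  refine ⟨fun j => if j = i then 0 else (lam j + mu j) / (1 - (lam i + mu i)),
    hc0, by simp, hrep, ?_⟩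
  set s := ∑ j, (if j = i then (0:ℝ) else (lam j + mu j) / (1 - (lam i + mu i))) with hs
  by_contra hle
  push_neg at hle
  have hsum_cx : ∑ j, (if j = i then (0:ℝ) else (lam j + mu j) / (1 - (lam i + mu i))) • x j
      = (x i - v) + s • v := by
    have h2 : ∑ j, (if j = i then (0:ℝ) else (lam j + mu j) / (1 - (lam i + mu i))) • (x j - v)
        = (∑ j, (if j = i then (0:ℝ) else (lam j + mu j) / (1 - (lam i + mu i))) • x j)
          - s • v := by
      simp only [smul_sub, Finset.sum_sub_distrib, ← Finset.sum_smul, ← hs]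
    have h3 := hrep
    rw [h2] at h3
    exact sub_eq_iff_eq_add.mp h3.symm
  have hcomb : ∑ o : Option (Fin p),
      (Option.elim o (1 - s) (fun j => if j = i then (0:ℝ)
        else (lam j + mu j) / (1 - (lam i + mu i)))) • (Option.elim o v x) = x i := by
    rw [Fintype.sum_option]
    simp only [Option.elim_none, Option.elim_some]
    rw [hsum_cx, sub_smul, one_smul]
    abel
  have hE := lemE hCconv (hxext i) Finset.univ
    (fun o => Option.elim o (1 - s) (fun j => if j = i then (0:ℝ)
      else (lam j + mu j) / (1 - (lam i + mu i))))
    (fun o => Option.elim o v x)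
    (fun o _ => by
      cases o with
      | none => simpa using (by linarith : (0:ℝ) ≤ 1 - s)
      | some j => simpa using hc0 j)
    (by rw [Fintype.sum_option]; simp only [Option.elim_none, Option.elim_some]
        rw [← hs]; ring)
    (fun o _ => by
      cases o with
      | none => exact hvC
      | some j => exact hxC j)
    hcomb
  have hs1 : s = 1 := by
    by_contra hs1
    have h1s : 0 < 1 - s := lt_of_le_of_ne (by linarith) (fun h => hs1 (by linarith))
    have := hE none (Finset.mem_univ _) (by simpa using h1s)
    exact hvnc.1 i (by simpa using this)
  have hxj : ∀ j, j ≠ i → 0 < lam j + mu j → x j = x i := by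
    intro j hji hpos
    have hcpos : 0 < (if j = i then (0:ℝ) else (lam j + mu j) / (1 - (lam i + mu i))) := by
      rw [if_neg hji]; exact div_pos hpos h1νi
    have := hE (some j) (Finset.mem_univ _) (by simpa using hcpos)
    simpa using this
  have hterm2 : ∀ (l : Fin p → ℝ), (∀ j, 0 ≤ l j) → (∀ j, l j ≤ lam j + mu j) →
      ∑ j, l j • (x j - v) = (∑ j, l j) • (x i - v) := by
    intro l h0 hlub
    rw [Finset.sum_smul]
    refine Finset.sum_congr rfl fun j _ => ?_
    by_cases hji : j = i
    · rw [hji]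
    · rcases eq_or_lt_of_le (h0 j) with h | h
      · rw [← h, zero_smul, zero_smul]
      · rw [hxj j hji (lt_of_lt_of_le h (hlub j))]
  exact hnot ⟨∑ j, lam j, Finset.sum_nonneg (fun j _ => hlam j),
      by rw [hw₁, hterm2 lam hlam (fun j => le_add_of_nonneg_right (hmu j))]⟩
    (∑ j, mu j) (Finset.sum_nonneg (fun j _ => hmu j))
    (by rw [hw₂, hterm2 mu hmu (fun j => le_add_of_nonneg_left (hlam j))])

set_option maxHeartbeats 2000000 in
theorem stmt2 {n p : ℕ} (hp : 0 < p)
    (A : Matrix (Fin n) (Fin n) ℝ) (hA : A.PosDef)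
    (b : Fin n → ℝ) (hb : b ≠ 0) (c : ℝ)
    (y : Fin n → ℝ) (hy : y = A⁻¹.mulVec b)
    (x : Fin p → (Fin n → ℝ))
    (α : ℝ) (hα : 0 < α)
    (hvnc : VertexNonCover x (α • y))
    (η : ℝ) (hη0 : 0 < η)
    (hη : η < 2 * α * (b ⬝ᵥ A⁻¹.mulVec b) - 2 * Finset.univ.sup'
      (Finset.univ_nonempty_iff.mpr ⟨⟨0, hp⟩⟩) (fun i => b ⬝ᵥ x i))
    (T : Set (Fin n → ℝ))
    (hT : T = {v | ∃ lam : Fin p → ℝ, (∀ i, 0 ≤ lam i) ∧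
      v = ∑ i, lam i • (x i - α • y)})
    (I : Set (Fin p))
    (hI : ∀ i, GeneratesExtremeRay T (x i - α • y) → i ∈ I)
    (β : Fin p → ℝ) (hβ : ∀ i, 0 ≤ β i)
    (hmin : ∀ γ : Fin p → ℝ, (∀ i, 0 ≤ γ i) →
      ((∑ i, β i • x i) ⬝ᵥ A.mulVec (∑ i, β i • x i)
          - 2 * ((∑ i, β i • x i) ⬝ᵥ b) + c) + η * ∑ i, β i ≤
        ((∑ i, γ i • x i) ⬝ᵥ A.mulVec (∑ i, γ i • x i)
          - 2 * ((∑ i, γ i • x i) ⬝ᵥ b) + c) + η * ∑ i, γ i) :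
    ∀ i, i ∉ I → β i = 0 := by
  classical
  intro i hiI
  by_contra hβine
  have hβi : 0 < β i := (hβ i).lt_of_ne (Ne.symm hβine)
  -- apply the geometric lemma
  have hnotray : ¬ GeneratesExtremeRay
      {u : Fin n → ℝ | ∃ lam : Fin p → ℝ, (∀ j, 0 ≤ lam j) ∧
        u = ∑ j, lam j • (x j - α • y)} (x i - α • y) := by
    intro h
    exact hiI (hI i (by rwa [hT]))
  obtain ⟨cf, hc0, hci, hrep, hslt⟩ := lemA x (α • y) hvnc i hnotray
  set s := ∑ j, cf j with hsdef
  have hs0 : (0:ℝ) < s := lt_trans one_pos hslt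
  -- basic matrix facts
  have hAT : Aᵀ = A := hA.1
  have hdet : IsUnit A.det := isUnit_iff_ne_zero.2 hA.det_pos.ne'
  have hAy : A *ᵥ y = b := by
    rw [hy, Matrix.mulVec_mulVec, Matrix.mul_nonsing_inv A hdet, Matrix.one_mulVec]
  have hAsymm : ∀ v1 v2 : Fin n → ℝ, v1 ⬝ᵥ A *ᵥ v2 = v2 ⬝ᵥ A *ᵥ v1 := by
    intro v1 v2
    rw [Matrix.dotProduct_mulVec]
    conv_lhs => rw [← hAT]
    rw [Matrix.vecMul_transpose, dotProduct_comm]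
  have hPSD : ∀ z : Fin n → ℝ, 0 ≤ z ⬝ᵥ A *ᵥ z := by
    intro z
    have := hA.posSemidef.dotProduct_mulVec_nonneg z
    simpa using this
  have hPD : ∀ z : Fin n → ℝ, z ≠ 0 → 0 < z ⬝ᵥ A *ᵥ z := by
    intro z hz
    have := hA.re_dotProduct_pos hz
    simpa using this
  set u := ∑ j, β j • x j with hu
  set S := ∑ j, β j with hS
  set Q := u ⬝ᵥ A *ᵥ u with hQ
  set r := u ⬝ᵥ b with hr
  set q := b ⬝ᵥ A⁻¹.mulVec b with hq
  have hqy : q = b ⬝ᵥ y := by rw [hq, hy]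
  have hqpos : 0 < q := by
    have := hA.inv.re_dotProduct_pos hb
    simpa [hq] using this
  have hyAy : y ⬝ᵥ A *ᵥ y = q := by
    rw [hAy, dotProduct_comm, hqy]
  have hyAu : y ⬝ᵥ A *ᵥ u = r := by
    rw [hAsymm, hAy, hr]
  -- quadratic expansion
  have hexpand : ∀ z : Fin n → ℝ,
      (u + z) ⬝ᵥ A *ᵥ (u + z) = Q + 2 * (z ⬝ᵥ A *ᵥ u) + z ⬝ᵥ A *ᵥ z := by
    intro z
    rw [Matrix.mulVec_add, dotProduct_add, add_dotProduct,
      add_dotProduct, hAsymm u z]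
    rw [hQ]; ring
  -- generic directional inequality
  have hdir : ∀ (t : ℝ) (d : Fin p → ℝ), (∀ j, 0 ≤ β j + t * d j) →
      0 ≤ 2 * (t * ((∑ j, d j • x j) ⬝ᵥ A *ᵥ u))
        + (t * t) * ((∑ j, d j • x j) ⬝ᵥ A *ᵥ (∑ j, d j • x j))
        - 2 * (t * ((∑ j, d j • x j) ⬝ᵥ b)) + η * (t * ∑ j, d j) := by
    intro t d hfeas
    have hsum_dir : ∑ j, (β j + t * d j) • x j = u + t • ∑ j, d j • x j := by
      simp only [add_smul, Finset.sum_add_distrib, mul_smul, ← Finset.smul_sum, hu]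
    have hsum_l1 : ∑ j, (β j + t * d j) = S + t * ∑ j, d j := by
      simp only [Finset.sum_add_distrib, ← Finset.mul_sum, hS]
    have h := hmin (fun j => β j + t * d j) hfeas
    rw [hsum_dir, hsum_l1, hexpand (t • ∑ j, d j • x j)] at h
    simp only [smul_dotProduct, dotProduct_smul, Matrix.mulVec_smul,
      add_dotProduct, dotProduct_add, smul_eq_mul] at h
    nlinarith [h]
  have pos_factor : ∀ {t E : ℝ}, 0 < t → 0 ≤ t * E → 0 ≤ E := by
    intro t E ht h
    exact le_of_mul_le_mul_left (by simpa using h) ht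
  have hSpos : 0 < S :=
    lt_of_lt_of_le hβi (Finset.single_le_sum (fun k _ => hβ k) (Finset.mem_univ i))
  -- compare with 0
  have hF0 : Q + η * S ≤ 2 * r := by
    have hfeas : ∀ j, 0 ≤ β j + 1 * (-β j) := fun j => by linarith
    have h := hdir 1 (fun j => -β j) hfeas
    have hnegu : ∑ j, (-β j) • x j = -u := by
      rw [hu, ← Finset.sum_neg_distrib]
      exact Finset.sum_congr rfl fun j _ => neg_smul _ _
    have hnegS : ∑ j, (-β j) = -S := by rw [hS, Finset.sum_neg_distrib]
    rw [hnegu, hnegS] at h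
    simp only [neg_dotProduct, dotProduct_neg, Matrix.mulVec_neg, neg_neg,
      ← hQ, ← hr] at h
    linarith
  have hQ0 : 0 ≤ Q := hQ ▸ hPSD u
  have hrpos : 0 < r := by nlinarith [mul_pos hη0 hSpos]
  have hune : u ≠ 0 := by
    intro h0
    rw [hr, h0, zero_dotProduct] at hrpos
    exact lt_irrefl 0 hrpos
  have hQpos : 0 < Q := hQ ▸ hPD u hune
  -- scaling yields stationarity
  have hEq : η * S = 2 * r - 2 * Q := by
    have hup : 2 * Q - 2 * r + η * S ≤ 0 := by
      have key : ∀ t : ℝ, 0 < t → t ≤ 1 → 2 * Q - 2 * r + η * S ≤ t * Q := by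
        intro t ht ht1
        have hfeas : ∀ j, 0 ≤ β j + t * (-β j) := by
          intro j
          have := hβ j
          nlinarith
        have h := hdir t (fun j => -β j) hfeas
        have hnegu : ∑ j, (-β j) • x j = -u := by
          rw [hu, ← Finset.sum_neg_distrib]
          exact Finset.sum_congr rfl fun j _ => neg_smul _ _
        have hnegS : ∑ j, (-β j) = -S := by rw [hS, Finset.sum_neg_distrib]
        rw [hnegu, hnegS] at h
        simp only [neg_dotProduct, dotProduct_neg, Matrix.mulVec_neg, neg_neg,
          ← hQ, ← hr] at h
        have hE : 0 ≤ -(2 * Q) + 2 * r - η * S + t * Q := pos_factor ht (by linarith [h])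
        linarith
      exact small_t one_pos key
    have hdown : -(2 * Q - 2 * r + η * S) ≤ 0 := by
      have key : ∀ t : ℝ, 0 < t → t ≤ 1 → -(2 * Q - 2 * r + η * S) ≤ t * Q := by
        intro t ht ht1
        have hfeas : ∀ j, 0 ≤ β j + t * β j := fun j => by nlinarith [hβ j, ht.le]
        have h := hdir t β hfeas
        rw [← hu] at h
        simp only [← hQ, ← hr] at h
        have hE : 0 ≤ 2 * Q - 2 * r + η * S + t * Q := pos_factor ht (by linarith [h])
        linarith
      exact small_t one_pos key
    linarith
  -- Cauchy-Schwarz type bound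
  have hCS : r * r ≤ Q * q := by
    have h := hPSD (u + (-(r / q)) • y)
    rw [hexpand] at h
    simp only [smul_dotProduct, dotProduct_smul, Matrix.mulVec_smul,
      smul_eq_mul, hyAu, hyAy] at h
    have hrq : r / q * q = r := div_mul_cancel₀ r hqpos.ne'
    have hh : 0 ≤ Q - r / q * r := by nlinarith [h]
    have hrq2 : r / q * q * r = r * r := by rw [hrq]
    have hh2 : 0 * q ≤ (Q - r / q * r) * q := mul_le_mul_of_nonneg_right hh hqpos.le
    nlinarith [hh2, hrq2]
  -- direction +e i
  have hDplus : -η ≤ 2 * (x i ⬝ᵥ A *ᵥ u - x i ⬝ᵥ b) := by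
    have key : ∀ t : ℝ, 0 < t → t ≤ 1 →
        -(2 * (x i ⬝ᵥ A *ᵥ u - x i ⬝ᵥ b) + η) ≤ t * (x i ⬝ᵥ A *ᵥ x i) := by
      intro t ht ht1
      have hfeas : ∀ j, 0 ≤ β j + t * (if j = i then 1 else 0) := by
        intro j
        have h01 : (0:ℝ) ≤ if j = i then (1:ℝ) else 0 := by split <;> norm_num
        exact add_nonneg (hβ j) (mul_nonneg ht.le h01)
      have h := hdir t (fun j => if j = i then 1 else 0) hfeas
      have hD : ∑ j, (if j = i then (1:ℝ) else 0) • x j = x i := by simp [ite_smul]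
      have hd1 : ∑ j, (if j = i then (1:ℝ) else 0) = (1:ℝ) := by simp
      rw [hD, hd1] at h
      have hE : 0 ≤ 2 * (x i ⬝ᵥ A *ᵥ u) - 2 * (x i ⬝ᵥ b) + η + t * (x i ⬝ᵥ A *ᵥ x i) :=
        pos_factor ht (by linarith [h])
      linarith
    have := small_t one_pos key
    linarith
  -- direction cf/s - e i
  have hW : (x i - α • y) ⬝ᵥ A *ᵥ u - (x i - α • y) ⬝ᵥ b ≤ 0 := by
    have hK2nn : 0 ≤ (x i - α • y) ⬝ᵥ A *ᵥ (x i - α • y) := hPSD _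
    have hτ : 0 < 1 - 1 / s := by
      have : 1 / s < 1 := by rw [div_lt_one hs0]; exact hslt
      linarith
    have hXc : ∑ j, cf j • x j = (x i - α • y) + s • (α • y) := by
      have h2 : ∑ j, cf j • (x j - α • y) = (∑ j, cf j • x j) - s • (α • y) := by
        simp only [smul_sub, Finset.sum_sub_distrib, ← Finset.sum_smul, ← hsdef]
      have h3 := hrep
      rw [h2] at h3
      exact sub_eq_iff_eq_add.mp h3.symm
    have hD2 : ∑ j, (cf j / s - if j = i then (1:ℝ) else 0) • x j
        = (-(1 - 1 / s)) • (x i - α • y) := by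
      have hsplit : ∀ j ∈ Finset.univ, (cf j / s - if j = i then (1:ℝ) else 0) • x j
          = (1 / s) • (cf j • x j) - (if j = i then (1:ℝ) else 0) • x j := by
        intro j _
        have hc : cf j / s = (1 / s) * cf j := by ring
        rw [sub_smul, hc, mul_smul]
      rw [Finset.sum_congr rfl hsplit, Finset.sum_sub_distrib, ← Finset.smul_sum, hXc]
      have hsingle : ∑ j, (if j = i then (1:ℝ) else 0) • x j = x i := by simp [ite_smul]
      rw [hsingle]
      match_scalars <;> (field_simp; try ring)
    have hd2sum : ∑ j, (cf j / s - if j = i then (1:ℝ) else 0) = 0 := by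
      rw [Finset.sum_sub_distrib, ← Finset.sum_div, ← hsdef, div_self hs0.ne']
      simp
    have key : ∀ t : ℝ, 0 < t → t ≤ β i →
        2 * ((1 - 1/s) * ((x i - α • y) ⬝ᵥ A *ᵥ u - (x i - α • y) ⬝ᵥ b)) ≤
          t * ((1 - 1/s) * (1 - 1/s) * ((x i - α • y) ⬝ᵥ A *ᵥ (x i - α • y))) := by
      intro t ht htβ
      have hfeas : ∀ j, 0 ≤ β j + t * (cf j / s - if j = i then (1:ℝ) else 0) := by
        intro j
        by_cases hji : j = i
        · subst hji
          rw [if_pos rfl, hci]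
          have : (0:ℝ) / s - 1 = -1 := by rw [zero_div]; ring
          rw [this]
          linarith
        · rw [if_neg hji, sub_zero]
          exact add_nonneg (hβ j) (mul_nonneg ht.le (div_nonneg (hc0 j) hs0.le))
      have h := hdir t (fun j => cf j / s - if j = i then (1:ℝ) else 0) hfeas
      rw [hD2, hd2sum] at h
      simp only [smul_dotProduct, dotProduct_smul, Matrix.mulVec_smul,
        smul_eq_mul, neg_mul, mul_neg, neg_neg, mul_zero] at h
      have hE : 0 ≤ -(2 * ((1 - 1/s) * ((x i - α • y) ⬝ᵥ A *ᵥ u - (x i - α • y) ⬝ᵥ b)))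
          + t * ((1 - 1/s) * (1 - 1/s) * ((x i - α • y) ⬝ᵥ A *ᵥ (x i - α • y))) :=
        pos_factor ht (by linarith [h])
      linarith
    have h2 := small_t hβi key
    nlinarith [h2, hτ]
  -- put the pieces together
  have hexp1 : (x i - α • y) ⬝ᵥ A *ᵥ u = x i ⬝ᵥ A *ᵥ u - α * r := by
    rw [sub_dotProduct, smul_dotProduct, hyAu, smul_eq_mul]
  have hexp2 : (x i - α • y) ⬝ᵥ b = x i ⬝ᵥ b - α * q := by
    rw [sub_dotProduct, smul_dotProduct, smul_eq_mul,
      dotProduct_comm y b, ← hqy]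
  have hry : -η ≤ 2 * α * (r - q) := by
    rw [hexp1, hexp2] at hW
    linarith
  set M := Finset.univ.sup' (Finset.univ_nonempty_iff.mpr ⟨⟨0, hp⟩⟩) (fun i => b ⬝ᵥ x i)
    with hM
  have hxb : ∀ j, x j ⬝ᵥ b ≤ M := fun j => by
    rw [dotProduct_comm]
    exact Finset.le_sup' (fun k => b ⬝ᵥ x k) (Finset.mem_univ j)
  have hrSM : r ≤ S * M := by
    have h1 : r = ∑ j, β j * (x j ⬝ᵥ b) := by
      rw [hr, hu]
      unfold dotProduct
      simp only [Finset.sum_apply, Pi.smul_apply, smul_eq_mul, Finset.sum_mul, Finset.mul_sum]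
      rw [Finset.sum_comm]
      exact Finset.sum_congr rfl fun j _ => Finset.sum_congr rfl fun k _ => by ring
    rw [h1, hS, Finset.sum_mul]
    exact Finset.sum_le_sum fun j _ => mul_le_mul_of_nonneg_left (hxb j) (hβ j)
  have hMpos : 0 < M := by
    by_contra hMn
    push_neg at hMn
    nlinarith [mul_nonpos_of_nonneg_of_nonpos hSpos.le hMn]
  -- final contradiction
  have h1 : η * S * q ≤ 2 * r * q - 2 * (r * r) := by nlinarith [hEq, hCS, hqpos]
  have h2 : η * r ≤ η * (S * M) := mul_le_mul_of_nonneg_left hrSM hη0.le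
  have h3 : M * (η * S * q) ≤ M * (2 * r * q - 2 * (r * r)) :=
    mul_le_mul_of_nonneg_left h1 hMpos.le
  have h4 : 2 * (q - r) ≤ η / α := by
    rw [le_div_iff₀ hα]
    linarith
  have h5 : M * r * (2 * (q - r)) ≤ M * r * (η / α) :=
    mul_le_mul_of_nonneg_left h4 (by positivity)
  have h6 : η * r * q ≤ M * (η * S * q) := by nlinarith [h2, hqpos]
  have h7 : η * r * q ≤ M * r * (η / α) := by nlinarith [h6, h3, h5]
  have h8 : α * q ≤ M := by
    have hηr : 0 < η * r := mul_pos hη0 hrpos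
    have h9 : α * (η * r * q) ≤ α * (M * r * (η / α)) := mul_le_mul_of_nonneg_left h7 hα.le
    have h10 : α * (M * r * (η / α)) = M * r * η := by field_simp
    refine le_of_mul_le_mul_right ?_ hηr
    nlinarith [h9, h10]
  linarith [hη, h8, hη0, hMpos]
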